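/- Let G be a finite group, S a Sylow p-subgroup, Q = O_p(G) the largest normal p-subgroup of G, and R = C_G(Q·C_S(Q)). Then G = C_G(Q) · N_G(R). -/

import Mathlib

open Pointwise

private lemma mem_normalizer_iff_conj_smul {G : Type*} [Group G] {g : G} {H : Subgroup G} :
    g ∈ Subgroup.normalizer (H : Set G) ↔ MulAut.conj g • H = H := by
  rw [Subgroup.mem_normalizer_iff'']
  constructor
  · intro h
    ext x
    rw [Subgroup.mem_pointwise_smul_iff_inv_smul_mem]
    exact (h x).symm.trans (by simp [MulAut.smul_def])
  · intro h x
    conv_lhs => rw [← h]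
    rw [Subgroup.mem_pointwise_smul_iff_inv_smul_mem]
    simp [MulAut.smul_def]

private lemma normalizer_le_normalizer_centralizer {G : Type*} [Group G] (K : Subgroup G) :
    Subgroup.normalizer (K : Set G) ≤ Subgroup.normalizer (Subgroup.centralizer (K : Set G) : Set G) := by
  intro g hg
  rw [Subgroup.mem_normalizer_iff] at hg ⊢
  intro x
  constructor
  · intro hx
    rw [Subgroup.mem_centralizer_iff] at hx ⊢
    intro h hh
    have hmem : g⁻¹ * h * g ∈ K := by
      have := (hg (g⁻¹ * h * g)).2 (by
        have : g * (g⁻¹ * h * g) * g⁻¹ = h := by group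
        rw [this]; exact hh)
      exact this
    calc h * (g * x * g⁻¹) = g * ((g⁻¹ * h * g) * x) * g⁻¹ := by group
      _ = g * (x * (g⁻¹ * h * g)) * g⁻¹ := by rw [hx _ hmem]
      _ = (g * x * g⁻¹) * h := by group
  · intro hx
    rw [Subgroup.mem_centralizer_iff] at hx ⊢
    intro h hh
    have hmem : g * h * g⁻¹ ∈ K := (hg h).1 hh
    have := hx _ hmem
    calc h * x = g⁻¹ * ((g * h * g⁻¹) * (g * x * g⁻¹)) * g := by group
      _ = g⁻¹ * ((g * x * g⁻¹) * (g * h * g⁻¹)) * g := by rw [this]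
      _ = x * h := by group

private lemma normal_conj_smul {G : Type*} [Group G] {H : Subgroup G} (hH : H.Normal) (g : G) :
    MulAut.conj g • H = H :=
  mem_normalizer_iff_conj_smul.mp (by rw [Subgroup.normalizer_eq_top_iff.mpr hH]; trivial)

/-- Frattini-type factorization: if `G` is a finite group, `S` a Sylow `p`-subgroup,
`Q = O_p(G)` the largest normal `p`-subgroup of `G` and `R = C_G(Q·C_S(Q))`,
then `G = C_G(Q) · N_G(R)`. -/
theorem centralizer_mul_normalizer_eq_univ
    {p : ℕ} [Fact p.Prime] {G : Type*} [Group G] [Finite G]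
    (S : Sylow p G) (Q : Subgroup G)
    (hQnormal : Q.Normal) (hQp : IsPGroup p Q)
    (hQmax : ∀ N : Subgroup G, N.Normal → IsPGroup p N → N ≤ Q)
    (R : Subgroup G)
    (hR : R = Subgroup.centralizer ((Q ⊔ (Subgroup.centralizer (Q : Set G) ⊓ S) : Subgroup G) : Set G)) :
    (Subgroup.centralizer (Q : Set G) : Set G) * (Subgroup.normalizer (R : Set G) : Set G) = Set.univ := by
  set N : Subgroup G := Subgroup.centralizer (Q : Set G) with hN
  set T : Subgroup G := N ⊓ S with hT
  have hNnormal : N.Normal := by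
    rw [← Subgroup.normalizer_eq_top_iff, eq_top_iff]
    intro g _
    exact normalizer_le_normalizer_centralizer Q
      (by rw [Subgroup.normalizer_eq_top_iff.mpr hQnormal]; trivial)
  haveI := hNnormal
  -- `T` is the image of a Sylow `p`-subgroup of `N`
  have hTp : IsPGroup p T := IsPGroup.to_inf_right S.isPGroup'
  obtain ⟨P, hP⟩ := (hTp.comap_subtype (K := N)).exists_le_sylow
  have hTM : T ≤ (P : Subgroup N).map N.subtype := by
    have := Subgroup.map_mono (f := N.subtype) hP
    rwa [Subgroup.map_comap_eq, Subgroup.range_subtype, inf_of_le_right (inf_le_left : T ≤ N)] at this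
  have hMN : (P : Subgroup N).map N.subtype ≤ N := by
    rintro x ⟨y, _, rfl⟩; exact y.2
  have hMp : IsPGroup p ((P : Subgroup N).map N.subtype) := P.2.map _
  obtain ⟨S', hS'⟩ := hMp.exists_le_sylow
  obtain ⟨g, hg⟩ := MulAction.exists_smul_eq G S' S
  have hsmul : MulAut.conj g • ((P : Subgroup N).map N.subtype) ≤ T := by
    apply le_inf
    · calc MulAut.conj g • ((P : Subgroup N).map N.subtype)
          ≤ MulAut.conj g • (N : Subgroup G) :=
            (Subgroup.pointwise_smul_le_pointwise_smul_iff).mpr hMN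
        _ = N := normal_conj_smul hNnormal g
    · calc MulAut.conj g • ((P : Subgroup N).map N.subtype)
          ≤ MulAut.conj g • (S' : Subgroup G) :=
            (Subgroup.pointwise_smul_le_pointwise_smul_iff).mpr hS'
        _ = ((g • S' : Sylow p G) : Subgroup G) := rfl
        _ = S := by rw [hg]
  -- hence `T` equals that image, by cardinality
  have hTeq : T = (P : Subgroup N).map N.subtype := by
    apply SetLike.coe_injective
    apply Set.eq_of_subset_of_ncard_le hTM
    have hcard : Nat.card (MulAut.conj g • ((P : Subgroup N).map N.subtype) : Subgroup G)
          = Nat.card ((P : Subgroup N).map N.subtype) :=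
        Nat.card_congr (Subgroup.equivSMul (MulAut.conj g) _).symm.toEquiv
    have h1 : Nat.card ((P : Subgroup N).map N.subtype) ≤ Nat.card T := by
      rw [← hcard]; exact Subgroup.card_le_of_le hsmul
    rw [← Nat.card_coe_set_eq, ← Nat.card_coe_set_eq]; exact h1
  -- Frattini's argument
  have hFrattini : Subgroup.normalizer (T : Set G) ⊔ N = ⊤ := by
    rw [hTeq]; exact Sylow.normalizer_sup_eq_top P
  -- `N_G(T) ≤ N_G(R)`
  have hTR : Subgroup.normalizer (T : Set G) ≤ Subgroup.normalizer (R : Set G) := by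
    intro x hx
    have hx' : x ∈ Subgroup.normalizer ((Q ⊔ T : Subgroup G) : Set G) := by
      rw [mem_normalizer_iff_conj_smul] at hx ⊢
      rw [Subgroup.smul_sup, hx, normal_conj_smul hQnormal x]
    have := normalizer_le_normalizer_centralizer (Q ⊔ T) hx'
    rwa [hR]
  have hsup : N ⊔ Subgroup.normalizer (R : Set G) = ⊤ := by
    rw [eq_top_iff, ← hFrattini, sup_comm N]
    exact sup_le_sup_right hTR _
  calc (N : Set G) * (Subgroup.normalizer (R : Set G) : Set G) = ((N ⊔ Subgroup.normalizer (R : Set G) : Subgroup G) : Set G) :=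
        (Subgroup.normal_mul N (Subgroup.normalizer (R : Set G))).symm
    _ = Set.univ := by rw [hsup]; rfl
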